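/- No subgroup of the polycyclic group H₄ = ⟨r, a, b, z | r² = z, z central, a^r = a⁻¹, b^r = b⁻¹, b^a = bz²⟩ is isomorphic to ℤ³. Consequently the group P = ⟨a,b | b⁻¹a²b = a⁻², a⁻¹b²a = b⁻²⟩, which contains a subgroup isomorphic to ℤ³, is not isomorphic to any quotient of a subgroup of H₄. -/

import Mathlib

/-- Relators of the polycyclic group
`H₄ = ⟨r, a, b, z ∣ r² = z, z central, a^r = a⁻¹, b^r = b⁻¹, b^a = bz²⟩`
(`0 ↦ r`, `1 ↦ a`, `2 ↦ b`, `3 ↦ z`). -/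
def h4PcRels : Set (FreeGroup (Fin 4)) :=
  { FreeGroup.of 0 ^ 2 * (FreeGroup.of 3)⁻¹,
    FreeGroup.of 3 * FreeGroup.of 0 * (FreeGroup.of 3)⁻¹ * (FreeGroup.of 0)⁻¹,
    FreeGroup.of 3 * FreeGroup.of 1 * (FreeGroup.of 3)⁻¹ * (FreeGroup.of 1)⁻¹,
    FreeGroup.of 3 * FreeGroup.of 2 * (FreeGroup.of 3)⁻¹ * (FreeGroup.of 2)⁻¹,
    (FreeGroup.of 0)⁻¹ * FreeGroup.of 1 * FreeGroup.of 0 * FreeGroup.of 1,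
    (FreeGroup.of 0)⁻¹ * FreeGroup.of 2 * FreeGroup.of 0 * FreeGroup.of 2,
    (FreeGroup.of 1)⁻¹ * FreeGroup.of 2 * FreeGroup.of 1 *
      (FreeGroup.of 2 * FreeGroup.of 3 ^ 2)⁻¹ }

/-- The polycyclic group `H₄`. -/
abbrev H4Pc : Type := PresentedGroup h4PcRels

/-- Relators of `P = ⟨a, b ∣ b⁻¹a²b = a⁻², a⁻¹b²a = b⁻²⟩` (`0 ↦ a`, `1 ↦ b`). -/
def promislowRels : Set (FreeGroup (Fin 2)) :=
  { (FreeGroup.of 1)⁻¹ * (FreeGroup.of 0) ^ 2 * (FreeGroup.of 1) * (FreeGroup.of 0) ^ 2,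
    (FreeGroup.of 0)⁻¹ * (FreeGroup.of 1) ^ 2 * (FreeGroup.of 0) * (FreeGroup.of 1) ^ 2 }

/-- The Promislow group `P`. -/
abbrev PromislowGroup : Type := PresentedGroup promislowRels

def msgn (b : Bool) : ℤ := cond b (-1) 1

@[simp] lemma msgn_false : msgn false = 1 := rfl
@[simp] lemma msgn_true : msgn true = -1 := rfl

@[ext] structure M4 where
  neg : Bool
  a : ℤ
  b : ℤ
  z : ℤ

namespace M4

instance : Mul M4 :=
  ⟨fun x y => ⟨xor x.neg y.neg, msgn y.neg * x.a + y.a, msgn y.neg * x.b + y.b,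
    x.z + y.z + 2 * (msgn y.neg * x.b) * y.a + cond (x.neg && y.neg) 1 0⟩⟩

instance : One M4 := ⟨⟨false, 0, 0, 0⟩⟩

instance : Inv M4 :=
  ⟨fun x => ⟨x.neg, -(msgn x.neg * x.a), -(msgn x.neg * x.b),
    2 * x.b * x.a - x.z - cond x.neg 1 0⟩⟩

@[simp] lemma mul_neg' (x y : M4) : (x * y).neg = xor x.neg y.neg := rfl
@[simp] lemma mul_a (x y : M4) : (x * y).a = msgn y.neg * x.a + y.a := rfl
@[simp] lemma mul_b (x y : M4) : (x * y).b = msgn y.neg * x.b + y.b := rfl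
@[simp] lemma mul_z (x y : M4) :
    (x * y).z = x.z + y.z + 2 * (msgn y.neg * x.b) * y.a + cond (x.neg && y.neg) 1 0 := rfl
@[simp] lemma one_neg' : (1 : M4).neg = false := rfl
@[simp] lemma one_a : (1 : M4).a = 0 := rfl
@[simp] lemma one_b : (1 : M4).b = 0 := rfl
@[simp] lemma one_z : (1 : M4).z = 0 := rfl
@[simp] lemma inv_neg' (x : M4) : x⁻¹.neg = x.neg := rfl
@[simp] lemma inv_a (x : M4) : x⁻¹.a = -(msgn x.neg * x.a) := rfl
@[simp] lemma inv_b (x : M4) : x⁻¹.b = -(msgn x.neg * x.b) := rfl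
@[simp] lemma inv_z (x : M4) : x⁻¹.z = 2 * x.b * x.a - x.z - cond x.neg 1 0 := rfl

lemma mul_assoc' (x y z : M4) : x * y * z = x * (y * z) := by
  ext <;> (cases hx : x.neg <;> cases hy : y.neg <;> cases hz : z.neg <;>
    simp [hx, hy, hz] <;> ring)

lemma one_mul' (x : M4) : 1 * x = x := by ext <;> simp

lemma mul_one' (x : M4) : x * 1 = x := by ext <;> simp

lemma inv_mul_cancel' (x : M4) : x⁻¹ * x = 1 := by
  ext <;> (cases hx : x.neg <;> simp [hx] <;> ring)

instance : Group M4 where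
  mul_assoc := mul_assoc'
  one_mul := one_mul'
  mul_one := mul_one'
  inv_mul_cancel := inv_mul_cancel'

end M4

namespace M4

/-- central elements -/
def zn (u : ℤ) : M4 := ⟨false, 0, 0, u⟩

@[simp] lemma zn_neg' (u : ℤ) : (zn u).neg = false := rfl
@[simp] lemma zn_a (u : ℤ) : (zn u).a = 0 := rfl
@[simp] lemma zn_b (u : ℤ) : (zn u).b = 0 := rfl
@[simp] lemma zn_z (u : ℤ) : (zn u).z = u := rfl

@[simp] lemma zn_zero : zn 0 = 1 := rfl

lemma zn_mul (u w : ℤ) : zn u * zn w = zn (u + w) := by ext <;> simp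

lemma zn_zpow (u : ℤ) (k : ℤ) : (zn u) ^ k = zn (k * u) := by
  induction k using Int.induction_on with
  | zero => simp
  | succ n ih => rw [zpow_add_one, ih, zn_mul]; ring_nf
  | pred n ih => rw [zpow_sub_one, ih]
                 have : (zn u)⁻¹ = zn (-u) := by ext <;> simp
                 rw [this, zn_mul]; ring_nf

/-- powers of elements in the `neg = false` part. -/
lemma S_pow (x : M4) (hx : x.neg = false) (n : ℕ) :
    (x ^ n).neg = false ∧ (x ^ n).a = n * x.a ∧ (x ^ n).b = n * x.b := by
  induction n with
  | zero => simp
  | succ n ih => rw [pow_succ]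
                 refine ⟨by simp [ih.1, hx], ?_, ?_⟩ <;>
                   simp [hx, ih.1, ih.2.1, ih.2.2] <;> push_cast <;> ring

lemma S_zpow (x : M4) (hx : x.neg = false) (k : ℤ) :
    (x ^ k).neg = false ∧ (x ^ k).a = k * x.a ∧ (x ^ k).b = k * x.b := by
  obtain ⟨n, rfl | rfl⟩ := k.eq_nat_or_neg
  · rw [zpow_natCast]; exact_mod_cast S_pow x hx n
  · rw [zpow_neg, zpow_natCast]
    obtain ⟨h1, h2, h3⟩ := S_pow x hx n
    refine ⟨by simp [h1], ?_, ?_⟩ <;> simp [h1, h2, h3] <;> push_cast <;> ring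

lemma comm_zn (x y : M4) (hx : x.neg = false) (hy : y.neg = false) :
    x⁻¹ * y⁻¹ * x * y = zn (2 * (x.b * y.a - x.a * y.b)) := by
  ext <;> simp [hx, hy] <;> ring

end M4

section KeyLemma

variable {W : Subgroup M4} (h : W →* Multiplicative (ℤ × ℤ × ℤ))

local notation "f" => fun g : W => Multiplicative.toAdd (h g)

lemma f_mul (g₁ g₂ : W) : f (g₁ * g₂) = f g₁ + f g₂ := by simp

lemma f_zpow (g : W) (k : ℤ) : f (g ^ k) = k • f g := by simp

/-- If a `W`-word has vanishing a- and b-components, it is central `zn m`. -/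
lemma stepA (X Y Z : W) (cX : (X : M4).neg = false) (cY : (Y : M4).neg = false)
    (cZ : (Z : M4).neg = false) (i j k : ℤ)
    (ha : i * (X : M4).a + j * (Y : M4).a + k * (Z : M4).a = 0)
    (hb : i * (X : M4).b + j * (Y : M4).b + k * (Z : M4).b = 0) :
    ∃ m : ℤ, ((X ^ i * Y ^ j * Z ^ k : W) : M4) = M4.zn m := by
  obtain ⟨nX, aX, bX⟩ := M4.S_zpow (X : M4) cX i
  obtain ⟨nY, aY, bY⟩ := M4.S_zpow (Y : M4) cY j
  obtain ⟨nZ, aZ, bZ⟩ := M4.S_zpow (Z : M4) cZ k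
  refine ⟨((X ^ i * Y ^ j * Z ^ k : W) : M4).z, ?_⟩
  ext <;> push_cast <;>
    simp [nX, nY, nZ, aX, aY, aZ, bX, bY, bZ] <;> linarith [ha, hb]

lemma central_pair (P K : W) (m γ : ℤ) (hP : (P : M4) = M4.zn m)
    (hK : (K : M4) = M4.zn γ) : γ • f P = m • f K := by
  have : P ^ γ = K ^ m := by
    apply Subtype.ext
    push_cast
    rw [hP, hK, M4.zn_zpow, M4.zn_zpow, mul_comm]
  have := congrArg (fun g : W => Multiplicative.toAdd (h g)) this
  simpa using this

end KeyLemma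

section KeyProof

variable {W : Subgroup M4} (h : W →* Multiplicative (ℤ × ℤ × ℤ))

/-- No subgroup of `M4` surjects onto `ℤ³`. -/
theorem M4.no_Z3_quotient : ¬ Function.Surjective h := by
  intro hs
  obtain ⟨x, hx⟩ := hs (Multiplicative.ofAdd (1, 0, 0))
  obtain ⟨y, hy⟩ := hs (Multiplicative.ofAdd (0, 1, 0))
  obtain ⟨w, hw⟩ := hs (Multiplicative.ofAdd (0, 0, 1))
  set f : W → ℤ × ℤ × ℤ := fun g => Multiplicative.toAdd (h g) with hf
  have f_mul : ∀ g₁ g₂ : W, f (g₁ * g₂) = f g₁ + f g₂ := by intro g₁ g₂; simp [hf]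
  have f_zpow : ∀ (g : W) (k : ℤ), f (g ^ k) = k • f g := by intro g k; simp [hf]
  have f_one : f 1 = 0 := by simp [hf]
  set X : W := x * x with hX
  set Y : W := y * y with hY
  set Z : W := w * w with hZ
  have cX : (X : M4).neg = false := by simp [hX]
  have cY : (Y : M4).neg = false := by simp [hY]
  have cZ : (Z : M4).neg = false := by simp [hZ]
  have fx : f x = (1, 0, 0) := by simp [hf, hx]
  have fy : f y = (0, 1, 0) := by simp [hf, hy]
  have fw : f w = (0, 0, 1) := by simp [hf, hw]
  have fX : f X = (2, 0, 0) := by rw [hX, f_mul, fx]; norm_num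
  have fY : f Y = (0, 2, 0) := by rw [hY, f_mul, fy]; norm_num
  have fZ : f Z = (0, 0, 2) := by rw [hZ, f_mul, fw]; norm_num
  have f_inv : ∀ g : W, f g⁻¹ = - f g := by intro g; simp [hf]
  have coe_one : ∀ P : W, (P : M4) = 1 → f P = 0 := by
    intro P hP
    have : P = 1 := by exact_mod_cast hP
    rw [this]; exact f_one
  set s1 := (X : M4).a with hsd1
  set t1 := (X : M4).b with htd1
  set s2 := (Y : M4).a with hsd2
  set t2 := (Y : M4).b with htd2
  set s3 := (Z : M4).a with hsd3
  set t3 := (Z : M4).b with htd3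
  -- make a central word from a vanishing integer combination
  have mkP : ∀ i j k : ℤ, i * s1 + j * s2 + k * s3 = 0 → i * t1 + j * t2 + k * t3 = 0 →
      ∃ (P : W) (m : ℤ), (P : M4) = M4.zn m ∧ f P = (2 * i, 2 * j, 2 * k) := by
    intro i j k hsa hsb
    obtain ⟨m, hm⟩ := stepA X Y Z cX cY cZ i j k hsa hsb
    refine ⟨X ^ i * Y ^ j * Z ^ k, m, hm, ?_⟩
    rw [f_mul, f_mul, f_zpow, f_zpow, f_zpow, fX, fY, fZ]
    simp [Prod.ext_iff]
    omega
  have cpair : ∀ (P K : W) (m γ : ℤ), (P : M4) = M4.zn m → (K : M4) = M4.zn γ →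
      γ • f P = m • f K := fun P K m γ hP hK => central_pair h P K m γ hP hK
  -- case: some commutator is nontrivial
  have cross : ∀ (A B : W), (A : M4).neg = false → (B : M4).neg = false →
      ∃ K : W, (K : M4) = M4.zn (2 * ((A : M4).b * (B : M4).a - (A : M4).a * (B : M4).b))
        ∧ f K = 0 := by
    intro A B hA hB
    refine ⟨A⁻¹ * B⁻¹ * A * B, ?_, ?_⟩
    · push_cast
      exact M4.comm_zn _ _ hA hB
    · rw [f_mul, f_mul, f_mul, f_inv, f_inv]; abel
  -- generic finisher for a nonvanishing cross product
  have crosskill : ∀ (A B : W), (A : M4).neg = false → (B : M4).neg = false →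
      ¬ (A : M4).b * (B : M4).a - (A : M4).a * (B : M4).b = 0 →
      ∀ c : ℤ, c = (A : M4).b * (B : M4).a - (A : M4).a * (B : M4).b →
      (∃ (P : W) (m : ℤ), (P : M4) = M4.zn m ∧
        ((f P).1 = 2 * c ∨ (f P).2.1 = 2 * c ∨ (f P).2.2 = 2 * c)) → False := by
    intro A B hA hB hAB c hc ⟨P, m, hP, hcomp⟩
    obtain ⟨K, hK, hfK⟩ := cross A B hA hB
    have hpq := cpair P K m (2 * ((A : M4).b * (B : M4).a - (A : M4).a * (B : M4).b)) hP hK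
    rw [hfK, smul_zero] at hpq
    rw [← hc] at hpq
    have h1 := congrArg Prod.fst hpq
    have h2 := congrArg (fun p : ℤ × ℤ × ℤ => p.2.1) hpq
    have h3 := congrArg (fun p : ℤ × ℤ × ℤ => p.2.2) hpq
    simp only [Prod.smul_fst, Prod.smul_snd, Prod.fst_zero, Prod.snd_zero,
      smul_eq_mul] at h1 h2 h3
    apply hAB
    rw [← hc]
    rcases hcomp with hcc | hcc | hcc
    · rw [hcc] at h1
      have : (2 * c) * (2 * c) = 0 := by linear_combination h1
      have := mul_self_eq_zero.mp this
      linarith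
    · rw [hcc] at h2
      have : (2 * c) * (2 * c) = 0 := by linear_combination h2
      have := mul_self_eq_zero.mp this
      linarith
    · rw [hcc] at h3
      have : (2 * c) * (2 * c) = 0 := by linear_combination h3
      have := mul_self_eq_zero.mp this
      linarith
  by_cases hc12 : t1 * s2 - s1 * t2 = 0
  · by_cases hc13 : t1 * s3 - s1 * t3 = 0
    · by_cases hc23 : t2 * s3 - s2 * t3 = 0
      · -- all pairwise cross products vanish
        have kill2 : ∀ d1 d2 d3 : ℤ, d1 ≠ 0 →
            d2 * s1 - d1 * s2 = 0 → d2 * t1 - d1 * t2 = 0 →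
            d3 * s1 - d1 * s3 = 0 → d3 * t1 - d1 * t3 = 0 → False := by
          intro d1 d2 d3 hd1 r1 r2 r3 r4
          obtain ⟨P1, m1, hP1, hf1⟩ := mkP d2 (-d1) 0 (by linarith) (by linarith)
          obtain ⟨P2, m2, hP2, hf2⟩ := mkP d3 0 (-d1) (by linarith) (by linarith)
          have hpq := cpair P1 P2 m1 m2 hP1 hP2
          rw [hf1, hf2] at hpq
          have h2 := congrArg (fun p : ℤ × ℤ × ℤ => p.2.1) hpq
          simp only [Prod.smul_fst, Prod.smul_snd, smul_eq_mul] at h2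
          -- h2 : m2 * (2 * -d1) = m1 * 0
          have hm2 : m2 = 0 := by
            have hd : m2 * (2 * -d1) = 0 := by linear_combination h2
            rcases mul_eq_zero.mp hd with hh | hh
            · exact hh
            · exfalso; apply hd1; linarith
          have hfP2 : f P2 = 0 := by
            apply coe_one
            rw [hP2, hm2, M4.zn_zero]
          rw [hf2] at hfP2
          have := congrArg (fun p : ℤ × ℤ × ℤ => p.2.2) hfP2
          simp at this
          exact hd1 this
        by_cases hs1 : s1 = 0
        · by_cases ht1 : t1 = 0
          · -- v1 = 0 : X is central
            have hXzn : (X : M4) = M4.zn (X : M4).z := by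
              ext <;> simp [cX, ← hsd1, ← htd1, hs1, ht1]
            by_cases hs2 : s2 = 0
            · by_cases ht2 : t2 = 0
              · -- Y central too
                have hYzn : (Y : M4) = M4.zn (Y : M4).z := by
                  ext <;> simp [cY, ← hsd2, ← htd2, hs2, ht2]
                have hpq := cpair Y X (Y : M4).z (X : M4).z hYzn hXzn
                rw [fX, fY] at hpq
                have h1 := congrArg Prod.fst hpq
                have h2 := congrArg (fun p : ℤ × ℤ × ℤ => p.2.1) hpq
                simp only [Prod.smul_fst, Prod.smul_snd, smul_eq_mul] at h1 h2
                -- h1 : X.z * 0 = Y.z * 2, h2 : X.z * 2 = Y.z * 0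
                have hXz : (X : M4).z = 0 := by linarith
                have : f X = 0 := by
                  apply coe_one; rw [hXzn, hXz, M4.zn_zero]
                rw [fX] at this
                exact absurd (congrArg Prod.fst this) (by norm_num)
              · -- t2 ≠ 0 : relation between Y and Z
                obtain ⟨P, m, hP, hfP⟩ := mkP 0 t3 (-t2) (by linarith) (by linarith)
                have hpq := cpair P X m (X : M4).z hP hXzn
                rw [hfP, fX] at hpq
                have h1 := congrArg Prod.fst hpq
                simp only [Prod.smul_fst, smul_eq_mul] at h1
                -- h1 : X.z * (2*0) = m * 2
                have hm : m = 0 := by linarith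
                have hfP0 : f P = 0 := by
                  apply coe_one; rw [hP, hm, M4.zn_zero]
                rw [hfP] at hfP0
                have := congrArg (fun p : ℤ × ℤ × ℤ => p.2.2) hfP0
                simp at this
                exact ht2 this
            · -- s2 ≠ 0 : relation between Y and Z
              obtain ⟨P, m, hP, hfP⟩ := mkP 0 s3 (-s2) (by linarith) (by linarith)
              have hpq := cpair P X m (X : M4).z hP hXzn
              rw [hfP, fX] at hpq
              have h1 := congrArg Prod.fst hpq
              simp only [Prod.smul_fst, smul_eq_mul] at h1
              have hm : m = 0 := by linarith
              have hfP0 : f P = 0 := by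
                apply coe_one; rw [hP, hm, M4.zn_zero]
              rw [hfP] at hfP0
              have := congrArg (fun p : ℤ × ℤ × ℤ => p.2.2) hfP0
              simp at this
              exact hs2 this
          · exact kill2 t1 t2 t3 ht1 (by linarith) (by linarith) (by linarith) (by linarith)
        · exact kill2 s1 s2 s3 hs1 (by linarith) (by linarith) (by linarith) (by linarith)
      · -- c23 ≠ 0
        obtain ⟨P, m, hP, hfP⟩ := mkP (t2 * s3 - s2 * t3) (-(t1 * s3 - s1 * t3))
          (t1 * s2 - s1 * t2) (by ring) (by ring)
        exact crosskill Y Z cY cZ hc23 _ rfl ⟨P, m, hP, Or.inl (by rw [hfP])⟩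
    · -- c13 ≠ 0
      obtain ⟨P, m, hP, hfP⟩ := mkP (-(t2 * s3 - s2 * t3)) (t1 * s3 - s1 * t3)
        (-(t1 * s2 - s1 * t2)) (by ring) (by ring)
      exact crosskill X Z cX cZ hc13 _ rfl
        ⟨P, m, hP, Or.inr (Or.inl (by rw [hfP]))⟩
  · -- c12 ≠ 0
    obtain ⟨P, m, hP, hfP⟩ := mkP (t2 * s3 - s2 * t3) (-(t1 * s3 - s1 * t3))
      (t1 * s2 - s1 * t2) (by ring) (by ring)
    exact crosskill X Y cX cY hc12 _ rfl ⟨P, m, hP, Or.inr (Or.inr (by rw [hfP]))⟩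

end KeyProof


namespace M4

def Rm : M4 := ⟨true, 0, 0, 0⟩
def Am : M4 := ⟨false, 1, 0, 0⟩
def Bm : M4 := ⟨false, 0, 1, 0⟩
def Zm : M4 := ⟨false, 0, 0, 1⟩

def gens : Fin 4 → M4 := ![Rm, Am, Bm, Zm]

lemma rels_hold : ∀ r ∈ h4PcRels, FreeGroup.lift gens r = 1 := by
  intro r hr
  simp only [h4PcRels, Set.mem_insert_iff, Set.mem_singleton_iff] at hr
  rcases hr with rfl | rfl | rfl | rfl | rfl | rfl | rfl <;>
    · simp only [map_mul, map_inv, map_pow, FreeGroup.lift_apply_of]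
      simp only [gens, Matrix.cons_val_zero, Matrix.cons_val_one, Matrix.head_cons]
      ext <;> simp [Rm, Am, Bm, Zm, pow_succ] <;> norm_num

lemma Am_zpow (s : ℤ) : Am ^ s = ⟨false, s, 0, 0⟩ := by
  induction s using Int.induction_on with
  | zero => rfl
  | succ n ih => rw [zpow_add_one, ih]; ext <;> simp [Am]
  | pred n ih => rw [zpow_sub_one, ih]
                 have : Am⁻¹ = ⟨false, -1, 0, 0⟩ := by ext <;> simp [Am]
                 rw [this]; ext <;> simp <;> ring

lemma Bm_zpow (t : ℤ) : Bm ^ t = ⟨false, 0, t, 0⟩ := by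
  induction t using Int.induction_on with
  | zero => rfl
  | succ n ih => rw [zpow_add_one, ih]; ext <;> simp [Bm]
  | pred n ih => rw [zpow_sub_one, ih]
                 have : Bm⁻¹ = ⟨false, 0, -1, 0⟩ := by ext <;> simp [Bm]
                 rw [this]; ext <;> simp <;> ring

lemma Zm_zpow (u : ℤ) : Zm ^ u = ⟨false, 0, 0, u⟩ := by
  have : Zm = zn 1 := rfl
  rw [this, zn_zpow]; simp [zn]

end M4

namespace H4Pc

/-- the homomorphism from the presented group to the concrete model. -/
def φ : H4Pc →* M4 := PresentedGroup.toGroup M4.rels_hold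

def r : H4Pc := PresentedGroup.of 0
def a : H4Pc := PresentedGroup.of 1
def b : H4Pc := PresentedGroup.of 2
def z : H4Pc := PresentedGroup.of 3

@[simp] lemma φ_r : φ r = M4.Rm := PresentedGroup.toGroup.of _
@[simp] lemma φ_a : φ a = M4.Am := PresentedGroup.toGroup.of _
@[simp] lemma φ_b : φ b = M4.Bm := PresentedGroup.toGroup.of _
@[simp] lemma φ_z : φ z = M4.Zm := PresentedGroup.toGroup.of _

lemma rel_of_mem {w : FreeGroup (Fin 4)} (hw : w ∈ h4PcRels) :
    PresentedGroup.mk h4PcRels w = 1 :=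
  (QuotientGroup.eq_one_iff _).mpr (Subgroup.subset_normalClosure hw)

lemma hrr : r * r = z := by
  have h := rel_of_mem (by simp [h4PcRels]) (w := FreeGroup.of 0 ^ 2 * (FreeGroup.of 3)⁻¹)
  simp only [map_mul, map_inv, map_pow] at h
  have : (PresentedGroup.mk h4PcRels (FreeGroup.of 0)) ^ 2 *
      (PresentedGroup.mk h4PcRels (FreeGroup.of 3))⁻¹ = 1 := h
  rw [pow_two] at this
  group at this ⊢
  exact (mul_inv_eq_one.mp this)

end H4Pc

namespace H4Pc

@[simp] lemma mk_of (i : Fin 4) :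
    PresentedGroup.mk h4PcRels (FreeGroup.of i) = PresentedGroup.of i := rfl

lemma hzr : z * r = r * z := by
  have h := rel_of_mem (by simp [h4PcRels])
    (w := FreeGroup.of 3 * FreeGroup.of 0 * (FreeGroup.of 3)⁻¹ * (FreeGroup.of 0)⁻¹)
  simp only [map_mul, map_inv, mk_of] at h
  change z * r * z⁻¹ * r⁻¹ = 1 at h
  have h2 : z * r * z⁻¹ = r := mul_inv_eq_one.mp h
  calc z * r = z * r * z⁻¹ * z := by group
    _ = r * z := by rw [h2]

lemma hza : z * a = a * z := by
  have h := rel_of_mem (by simp [h4PcRels])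
    (w := FreeGroup.of 3 * FreeGroup.of 1 * (FreeGroup.of 3)⁻¹ * (FreeGroup.of 1)⁻¹)
  simp only [map_mul, map_inv, mk_of] at h
  change z * a * z⁻¹ * a⁻¹ = 1 at h
  have h2 : z * a * z⁻¹ = a := mul_inv_eq_one.mp h
  calc z * a = z * a * z⁻¹ * z := by group
    _ = a * z := by rw [h2]

lemma hzb : z * b = b * z := by
  have h := rel_of_mem (by simp [h4PcRels])
    (w := FreeGroup.of 3 * FreeGroup.of 2 * (FreeGroup.of 3)⁻¹ * (FreeGroup.of 2)⁻¹)
  simp only [map_mul, map_inv, mk_of] at h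
  change z * b * z⁻¹ * b⁻¹ = 1 at h
  have h2 : z * b * z⁻¹ = b := mul_inv_eq_one.mp h
  calc z * b = z * b * z⁻¹ * z := by group
    _ = b * z := by rw [h2]

lemma hra : r⁻¹ * a * r = a⁻¹ := by
  have h := rel_of_mem (by simp [h4PcRels])
    (w := (FreeGroup.of 0)⁻¹ * FreeGroup.of 1 * FreeGroup.of 0 * FreeGroup.of 1)
  simp only [map_mul, map_inv, mk_of] at h
  change r⁻¹ * a * r * a = 1 at h
  exact mul_eq_one_iff_eq_inv.mp h

lemma hrb : r⁻¹ * b * r = b⁻¹ := by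
  have h := rel_of_mem (by simp [h4PcRels])
    (w := (FreeGroup.of 0)⁻¹ * FreeGroup.of 2 * FreeGroup.of 0 * FreeGroup.of 2)
  simp only [map_mul, map_inv, mk_of] at h
  change r⁻¹ * b * r * b = 1 at h
  exact mul_eq_one_iff_eq_inv.mp h

lemma hab : a⁻¹ * b * a = b * z ^ 2 := by
  have h := rel_of_mem (by simp [h4PcRels])
    (w := (FreeGroup.of 1)⁻¹ * FreeGroup.of 2 * FreeGroup.of 1 *
      (FreeGroup.of 2 * FreeGroup.of 3 ^ 2)⁻¹)
  simp only [map_mul, map_inv, map_pow, mk_of] at h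
  change a⁻¹ * b * a * (b * z ^ 2)⁻¹ = 1 at h
  exact mul_inv_eq_one.mp h

lemma z_comm : ∀ g : H4Pc, Commute z g := by
  intro g
  have hg : g ∈ Subgroup.centralizer {z} := by
    apply PresentedGroup.generated_by
    intro j
    rw [Subgroup.mem_centralizer_iff]
    intro m hm
    rcases hm with rfl
    fin_cases j
    · exact hzr
    · exact hza
    · exact hzb
    · rfl
  exact (Subgroup.mem_centralizer_iff.mp hg z rfl)

end H4Pc

namespace H4Pc

lemma z_zpow_comm (u : ℤ) (g : H4Pc) : z ^ u * g = g * z ^ u :=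
  ((z_comm g).zpow_left u).eq

lemma har (s : ℤ) : a ^ s * r = r * a ^ (-s) := by
  have key : (MulAut.conj r⁻¹) a = a⁻¹ := by
    simp [MulAut.conj_apply, hra]
  have h2 : r⁻¹ * a ^ s * r = a ^ (-s) := by
    have := map_zpow (MulAut.conj r⁻¹) a s
    rw [key] at this
    simpa [MulAut.conj_apply, zpow_neg, mul_assoc] using this
  calc a ^ s * r = r * (r⁻¹ * a ^ s * r) := by group
    _ = r * a ^ (-s) := by rw [h2]

lemma hbr (t : ℤ) : b ^ t * r = r * b ^ (-t) := by
  have key : (MulAut.conj r⁻¹) b = b⁻¹ := by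
    simp [MulAut.conj_apply, hrb]
  have h2 : r⁻¹ * b ^ t * r = b ^ (-t) := by
    have := map_zpow (MulAut.conj r⁻¹) b t
    rw [key] at this
    simpa [MulAut.conj_apply, zpow_neg, mul_assoc] using this
  calc b ^ t * r = r * (r⁻¹ * b ^ t * r) := by group
    _ = r * b ^ (-t) := by rw [h2]

lemma conj_b_zpow (t : ℤ) : a⁻¹ * b ^ t * a = b ^ t * z ^ (2 * t) := by
  have key : (MulAut.conj a⁻¹) b = b * z ^ 2 := by
    simp [MulAut.conj_apply, hab]
  have := map_zpow (MulAut.conj a⁻¹) b t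
  rw [key] at this
  have hcomm : Commute b (z ^ 2) := ((z_comm b).symm.zpow_right 2)
  rw [hcomm.mul_zpow] at this
  have hz2 : (z ^ (2:ℕ)) ^ t = z ^ (2 * t) := by
    rw [← zpow_natCast, ← zpow_mul]; norm_num
  rw [hz2] at this
  simpa [MulAut.conj_apply, mul_assoc] using this

lemma hba (t : ℤ) : b ^ t * a = a * (b ^ t * z ^ (2 * t)) := by
  calc b ^ t * a = a * (a⁻¹ * b ^ t * a) := by group
    _ = a * (b ^ t * z ^ (2 * t)) := by rw [conj_b_zpow]

lemma hba' (t : ℤ) : b ^ t * a⁻¹ = a⁻¹ * (b ^ t * z ^ (-(2 * t))) := by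
  have h := conj_b_zpow t
  have h1 : b ^ t = a * b ^ t * a⁻¹ * z ^ (2 * t) := by
    calc b ^ t = a * (a⁻¹ * b ^ t * a) * a⁻¹ := by group
      _ = a * (b ^ t * z ^ (2 * t)) * a⁻¹ := by rw [h]
      _ = a * b ^ t * (z ^ (2 * t) * a⁻¹) := by group
      _ = a * b ^ t * (a⁻¹ * z ^ (2 * t)) := by rw [z_zpow_comm]
      _ = a * b ^ t * a⁻¹ * z ^ (2 * t) := by group
  have hY : a * b ^ t * a⁻¹ = b ^ t * z ^ (-(2 * t)) := by
    calc a * b ^ t * a⁻¹ = a * b ^ t * a⁻¹ * z ^ (2 * t) * z ^ (-(2 * t)) := by group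
      _ = b ^ t * z ^ (-(2 * t)) := by rw [← h1]
  calc b ^ t * a⁻¹ = a⁻¹ * (a * b ^ t * a⁻¹) := by group
    _ = a⁻¹ * (b ^ t * z ^ (-(2 * t))) := by rw [hY]

end H4Pc

namespace H4Pc

/-- normal form representative -/
def ψ (m : M4) : H4Pc := (cond m.neg r 1) * a ^ m.a * b ^ m.b * z ^ m.z

lemma psi_mul_z (m : M4) : ψ m * z = ψ ⟨m.neg, m.a, m.b, m.z + 1⟩ := by
  unfold ψ
  rw [mul_assoc _ (z ^ m.z) z, ← zpow_add_one]

lemma psi_mul_zinv (m : M4) : ψ m * z⁻¹ = ψ ⟨m.neg, m.a, m.b, m.z - 1⟩ := by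
  unfold ψ
  rw [mul_assoc _ (z ^ m.z) z⁻¹, ← zpow_sub_one]

lemma psi_mul_b (m : M4) : ψ m * b = ψ ⟨m.neg, m.a, m.b + 1, m.z⟩ := by
  unfold ψ
  calc cond m.neg r 1 * a ^ m.a * b ^ m.b * z ^ m.z * b
      = cond m.neg r 1 * a ^ m.a * b ^ m.b * (z ^ m.z * b) := by group
    _ = cond m.neg r 1 * a ^ m.a * b ^ m.b * (b * z ^ m.z) := by rw [z_zpow_comm]
    _ = cond m.neg r 1 * a ^ m.a * (b ^ m.b * b) * z ^ m.z := by group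
    _ = cond m.neg r 1 * a ^ m.a * b ^ (m.b + 1) * z ^ m.z := by rw [← zpow_add_one]

lemma psi_mul_binv (m : M4) : ψ m * b⁻¹ = ψ ⟨m.neg, m.a, m.b - 1, m.z⟩ := by
  unfold ψ
  calc cond m.neg r 1 * a ^ m.a * b ^ m.b * z ^ m.z * b⁻¹
      = cond m.neg r 1 * a ^ m.a * b ^ m.b * (z ^ m.z * b⁻¹) := by group
    _ = cond m.neg r 1 * a ^ m.a * b ^ m.b * (b⁻¹ * z ^ m.z) := by
        rw [← zpow_neg_one, z_zpow_comm m.z (b ^ (-1 : ℤ))]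
    _ = cond m.neg r 1 * a ^ m.a * (b ^ m.b * b⁻¹) * z ^ m.z := by group
    _ = cond m.neg r 1 * a ^ m.a * b ^ (m.b - 1) * z ^ m.z := by rw [← zpow_sub_one]

lemma psi_mul_a (m : M4) : ψ m * a = ψ ⟨m.neg, m.a + 1, m.b, m.z + 2 * m.b⟩ := by
  unfold ψ
  calc cond m.neg r 1 * a ^ m.a * b ^ m.b * z ^ m.z * a
      = cond m.neg r 1 * a ^ m.a * (b ^ m.b * (z ^ m.z * a)) := by group
    _ = cond m.neg r 1 * a ^ m.a * (b ^ m.b * (a * z ^ m.z)) := by rw [z_zpow_comm]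
    _ = cond m.neg r 1 * a ^ m.a * (b ^ m.b * a) * z ^ m.z := by group
    _ = cond m.neg r 1 * a ^ m.a * (a * (b ^ m.b * z ^ (2 * m.b))) * z ^ m.z := by rw [hba]
    _ = cond m.neg r 1 * (a ^ m.a * a) * b ^ m.b * (z ^ (2 * m.b) * z ^ m.z) := by group
    _ = cond m.neg r 1 * a ^ (m.a + 1) * b ^ m.b * z ^ (m.z + 2 * m.b) := by
        rw [← zpow_add_one, ← zpow_add]; ring_nf

lemma psi_mul_ainv (m : M4) : ψ m * a⁻¹ = ψ ⟨m.neg, m.a - 1, m.b, m.z - 2 * m.b⟩ := by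
  unfold ψ
  calc cond m.neg r 1 * a ^ m.a * b ^ m.b * z ^ m.z * a⁻¹
      = cond m.neg r 1 * a ^ m.a * (b ^ m.b * (z ^ m.z * a⁻¹)) := by group
    _ = cond m.neg r 1 * a ^ m.a * (b ^ m.b * (a⁻¹ * z ^ m.z)) := by
        rw [← zpow_neg_one a, z_zpow_comm m.z (a ^ (-1 : ℤ))]
    _ = cond m.neg r 1 * a ^ m.a * (b ^ m.b * a⁻¹) * z ^ m.z := by group
    _ = cond m.neg r 1 * a ^ m.a * (a⁻¹ * (b ^ m.b * z ^ (-(2 * m.b)))) * z ^ m.z := by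
        rw [hba']
    _ = cond m.neg r 1 * (a ^ m.a * a⁻¹) * b ^ m.b * (z ^ (-(2 * m.b)) * z ^ m.z) := by group
    _ = cond m.neg r 1 * a ^ (m.a - 1) * b ^ m.b * z ^ (m.z - 2 * m.b) := by
        rw [← zpow_sub_one, ← zpow_add]; ring_nf

lemma psi_mul_r (m : M4) :
    ψ m * r = ψ ⟨xor m.neg true, -m.a, -m.b, m.z + cond m.neg 1 0⟩ := by
  unfold ψ
  have step : cond m.neg r 1 * a ^ m.a * b ^ m.b * z ^ m.z * r
      = cond m.neg r 1 * (r * (a ^ (-m.a) * (b ^ (-m.b) * z ^ m.z))) := by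
    calc cond m.neg r 1 * a ^ m.a * b ^ m.b * z ^ m.z * r
        = cond m.neg r 1 * a ^ m.a * (b ^ m.b * (z ^ m.z * r)) := by group
      _ = cond m.neg r 1 * a ^ m.a * (b ^ m.b * (r * z ^ m.z)) := by rw [z_zpow_comm]
      _ = cond m.neg r 1 * a ^ m.a * (b ^ m.b * r) * z ^ m.z := by group
      _ = cond m.neg r 1 * a ^ m.a * (r * b ^ (-m.b)) * z ^ m.z := by rw [hbr]
      _ = cond m.neg r 1 * (a ^ m.a * r) * (b ^ (-m.b) * z ^ m.z) := by group
      _ = cond m.neg r 1 * (r * a ^ (-m.a)) * (b ^ (-m.b) * z ^ m.z) := by rw [har]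
      _ = cond m.neg r 1 * (r * (a ^ (-m.a) * (b ^ (-m.b) * z ^ m.z))) := by group
  rw [step]
  cases hn : m.neg
  · simp only [cond_false, one_mul, Bool.false_xor, cond_true]
    group
  · simp only [cond_true]
    calc r * (r * (a ^ (-m.a) * (b ^ (-m.b) * z ^ m.z)))
        = z * (a ^ (-m.a) * (b ^ (-m.b) * z ^ m.z)) := by rw [← mul_assoc, hrr]
      _ = a ^ (-m.a) * (b ^ (-m.b) * z ^ m.z) * z := (z_comm _).eq
      _ = cond (xor true true) r 1 * a ^ (-m.a) * b ^ (-m.b) * z ^ (m.z + 1) := by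
          simp only [Bool.xor_self, cond_false, one_mul]
          group

end H4Pc

namespace H4Pc

lemma hrinv : r⁻¹ = r * z⁻¹ := by
  have h : r * (r * z⁻¹) = 1 := by rw [← mul_assoc, hrr, mul_inv_cancel]
  exact inv_eq_of_mul_eq_one_right h |>.symm ▸ (inv_eq_of_mul_eq_one_right h)

lemma psi_mul_rinv (m : M4) :
    ψ m * r⁻¹ = ψ ⟨xor m.neg true, -m.a, -m.b, m.z + cond m.neg 1 0 - 1⟩ := by
  rw [hrinv, ← mul_assoc, psi_mul_r, psi_mul_zinv]

lemma psi_one : ψ 1 = 1 := by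
  unfold ψ
  show cond false r 1 * a ^ (0:ℤ) * b ^ (0:ℤ) * z ^ (0:ℤ) = 1
  simp

/-- every element of H4Pc has a normal form. -/
lemma psi_surj : ∀ x : H4Pc, ∃ m : M4, ψ m = x := by
  have main : ∀ w : FreeGroup (Fin 4), ∀ m : M4,
      ∃ m' : M4, ψ m' = ψ m * PresentedGroup.mk h4PcRels w := by
    intro w
    induction w using FreeGroup.induction_on with
    | C1 => intro m; exact ⟨m, by simp⟩
    | of x =>
        intro m
        fin_cases x
        · exact ⟨_, (psi_mul_r m).symm⟩
        · exact ⟨_, (psi_mul_a m).symm⟩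
        · exact ⟨_, (psi_mul_b m).symm⟩
        · exact ⟨_, (psi_mul_z m).symm⟩
    | inv_of x _ =>
        intro m
        rw [map_inv]
        fin_cases x
        · exact ⟨_, (psi_mul_rinv m).symm⟩
        · exact ⟨_, (psi_mul_ainv m).symm⟩
        · exact ⟨_, (psi_mul_binv m).symm⟩
        · exact ⟨_, (psi_mul_zinv m).symm⟩
    | mul x y ihx ihy =>
        intro m
        rw [map_mul, ← mul_assoc]
        obtain ⟨m1, hm1⟩ := ihx m
        obtain ⟨m2, hm2⟩ := ihy m1
        exact ⟨m2, by rw [hm2, hm1]⟩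
  intro x
  induction x using PresentedGroup.induction_on with
  | _ w =>
      obtain ⟨m', hm'⟩ := main w 1
      exact ⟨m', by rw [hm', psi_one, one_mul]⟩

lemma phi_psi (m : M4) : φ (ψ m) = m := by
  unfold ψ
  rw [map_mul, map_mul, map_mul, map_zpow, map_zpow, map_zpow, φ_a, φ_b, φ_z]
  have hc : φ (cond m.neg r 1) = cond m.neg M4.Rm 1 := by
    cases m.neg
    · simp
    · simp
  rw [hc, M4.Am_zpow, M4.Bm_zpow, M4.Zm_zpow]
  cases hn : m.neg
  · ext <;> simp [M4.Rm, hn] <;> ring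
  · ext <;> simp [M4.Rm, hn] <;> ring

lemma phi_inj : Function.Injective φ := by
  intro x x' hxx
  obtain ⟨m, rfl⟩ := psi_surj x
  obtain ⟨m', rfl⟩ := psi_surj x'
  rw [phi_psi, phi_psi] at hxx
  rw [hxx]

end H4Pc

/-- No subgroup of `H4Pc` surjects onto `ℤ³`. -/
theorem H4Pc.no_Z3_quot (U : Subgroup H4Pc) (g : U →* Multiplicative (ℤ × ℤ × ℤ)) :
    ¬ Function.Surjective g := by
  intro hg
  set W : Subgroup M4 := U.map φ with hW
  have e : U ≃* W := Subgroup.equivMapOfInjective U φ phi_inj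
  have h : W →* Multiplicative (ℤ × ℤ × ℤ) := g.comp e.symm.toMonoidHom
  exact M4.no_Z3_quotient (g.comp e.symm.toMonoidHom)
    (hg.comp e.symm.surjective)


/-- Concrete crystallographic model receiving the Promislow group. -/
@[ext] structure G2 where
  c : Bool
  d : Bool
  x : ℤ
  y : ℤ
  z : ℤ

namespace G2

/-- component signs of the holonomy part. -/
def sx (g : G2) : ℤ := msgn g.d
def sy (g : G2) : ℤ := msgn g.c
def sz (g : G2) : ℤ := msgn (xor g.c g.d)

instance : Mul G2 :=
  ⟨fun u v => ⟨xor u.c v.c, xor u.d v.d, sx v * u.x + v.x, sy v * u.y + v.y, sz v * u.z + v.z⟩⟩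

instance : One G2 := ⟨⟨false, false, 0, 0, 0⟩⟩

instance : Inv G2 :=
  ⟨fun u => ⟨u.c, u.d, -(sx u * u.x), -(sy u * u.y), -(sz u * u.z)⟩⟩

@[simp] lemma mul_c (u v : G2) : (u * v).c = xor u.c v.c := rfl
@[simp] lemma mul_d (u v : G2) : (u * v).d = xor u.d v.d := rfl
@[simp] lemma mul_x (u v : G2) : (u * v).x = sx v * u.x + v.x := rfl
@[simp] lemma mul_y (u v : G2) : (u * v).y = sy v * u.y + v.y := rfl
@[simp] lemma mul_z (u v : G2) : (u * v).z = sz v * u.z + v.z := rfl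
@[simp] lemma one_c : (1 : G2).c = false := rfl
@[simp] lemma one_d : (1 : G2).d = false := rfl
@[simp] lemma one_x : (1 : G2).x = 0 := rfl
@[simp] lemma one_y : (1 : G2).y = 0 := rfl
@[simp] lemma one_z : (1 : G2).z = 0 := rfl
@[simp] lemma inv_c (u : G2) : u⁻¹.c = u.c := rfl
@[simp] lemma inv_d (u : G2) : u⁻¹.d = u.d := rfl
@[simp] lemma inv_x (u : G2) : u⁻¹.x = -(sx u * u.x) := rfl
@[simp] lemma inv_y (u : G2) : u⁻¹.y = -(sy u * u.y) := rfl
@[simp] lemma inv_z (u : G2) : u⁻¹.z = -(sz u * u.z) := rfl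

set_option maxHeartbeats 1000000 in
lemma mul_assoc' (u v w : G2) : u * v * w = u * (v * w) := by
  obtain ⟨c1, d1, x1, y1, z1⟩ := u
  obtain ⟨c2, d2, x2, y2, z2⟩ := v
  obtain ⟨c3, d3, x3, y3, z3⟩ := w
  cases c1 <;> cases d1 <;> cases c2 <;> cases d2 <;> cases c3 <;> cases d3 <;>
    (ext <;> simp [sx, sy, sz] <;> ring)

lemma one_mul' (u : G2) : 1 * u = u := by ext <;> simp

lemma mul_one' (u : G2) : u * 1 = u := by ext <;> simp [sx, sy, sz]

lemma inv_mul_cancel' (u : G2) : u⁻¹ * u = 1 := by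
  ext <;> (cases hc : u.c <;> cases hd : u.d <;> simp [sx, sy, sz, hc, hd] <;> ring)

instance : Group G2 where
  mul_assoc := mul_assoc'
  one_mul := one_mul'
  mul_one := mul_one'
  inv_mul_cancel := inv_mul_cancel'

def Ag : G2 := ⟨true, false, 1, 1, 0⟩
def Bg : G2 := ⟨false, true, 0, 1, 1⟩

def gens2 : Fin 2 → G2 := ![Ag, Bg]

lemma rels2_hold : ∀ r ∈ promislowRels, FreeGroup.lift gens2 r = 1 := by
  intro r hr
  simp only [promislowRels, Set.mem_insert_iff, Set.mem_singleton_iff] at hr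
  rcases hr with rfl | rfl <;>
    · simp only [map_mul, map_inv, map_pow, FreeGroup.lift_apply_of]
      simp only [gens2, Matrix.cons_val_zero, Matrix.cons_val_one, Matrix.head_cons]
      ext <;> simp [Ag, Bg, sx, sy, sz, pow_succ] <;> norm_num

end G2

namespace PromislowGroup

def θ : PromislowGroup →* G2 := PresentedGroup.toGroup G2.rels2_hold

def pa : PromislowGroup := PresentedGroup.of 0
def pb : PromislowGroup := PresentedGroup.of 1

@[simp] lemma θ_pa : θ pa = G2.Ag := PresentedGroup.toGroup.of _
@[simp] lemma θ_pb : θ pb = G2.Bg := PresentedGroup.toGroup.of _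

@[simp] lemma mk_of2 (i : Fin 2) :
    PresentedGroup.mk promislowRels (FreeGroup.of i) = PresentedGroup.of i := rfl

lemma rel_of_mem2 {w : FreeGroup (Fin 2)} (hw : w ∈ promislowRels) :
    PresentedGroup.mk promislowRels w = 1 :=
  (QuotientGroup.eq_one_iff _).mpr (Subgroup.subset_normalClosure hw)

lemma E1 : pb⁻¹ * pa ^ 2 * pb = (pa ^ 2)⁻¹ := by
  have h := rel_of_mem2 (by simp [promislowRels])
    (w := (FreeGroup.of 1)⁻¹ * (FreeGroup.of 0) ^ 2 * (FreeGroup.of 1) * (FreeGroup.of 0) ^ 2)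
  simp only [map_mul, map_inv, map_pow, mk_of2] at h
  change pb⁻¹ * pa ^ 2 * pb * pa ^ 2 = 1 at h
  exact mul_eq_one_iff_eq_inv.mp h

lemma E2 : pa⁻¹ * pb ^ 2 * pa = (pb ^ 2)⁻¹ := by
  have h := rel_of_mem2 (by simp [promislowRels])
    (w := (FreeGroup.of 0)⁻¹ * (FreeGroup.of 1) ^ 2 * (FreeGroup.of 0) * (FreeGroup.of 1) ^ 2)
  simp only [map_mul, map_inv, map_pow, mk_of2] at h
  change pa⁻¹ * pb ^ 2 * pa * pb ^ 2 = 1 at h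
  exact mul_eq_one_iff_eq_inv.mp h

/-- if conjugation by `g` inverts `x` then `x` commutes with `g ^ 2`. -/
lemma conj_sq_comm {G : Type*} [Group G] (x g : G) (h : g⁻¹ * x * g = x⁻¹) :
    Commute x (g ^ 2) := by
  have h2 : g⁻¹ * x⁻¹ * g = x := by
    calc g⁻¹ * x⁻¹ * g = (g⁻¹ * x * g)⁻¹ := by group
      _ = x := by rw [h]; group
  show x * g ^ 2 = g ^ 2 * x
  rw [pow_two]
  calc x * (g * g) = g * g * (g⁻¹ * (g⁻¹ * x * g) * g) := by group
    _ = g * g * (g⁻¹ * x⁻¹ * g) := by rw [h]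
    _ = g * g * x := by rw [h2]

lemma c1 : Commute (pa ^ 2) (pb ^ 2) := conj_sq_comm _ _ E1

lemma F1 : (pa * pb)⁻¹ * pa ^ 2 * (pa * pb) = (pa ^ 2)⁻¹ := by
  calc (pa * pb)⁻¹ * pa ^ 2 * (pa * pb) = pb⁻¹ * pa ^ 2 * pb := by group
    _ = (pa ^ 2)⁻¹ := E1

lemma F2 : (pa * pb)⁻¹ * pb ^ 2 * (pa * pb) = (pb ^ 2)⁻¹ := by
  calc (pa * pb)⁻¹ * pb ^ 2 * (pa * pb) = pb⁻¹ * (pa⁻¹ * pb ^ 2 * pa) * pb := by group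
    _ = pb⁻¹ * (pb ^ 2)⁻¹ * pb := by rw [E2]
    _ = (pb ^ 2)⁻¹ := by group

lemma c2 : Commute (pa ^ 2) ((pa * pb) ^ 2) := conj_sq_comm _ _ F1
lemma c3 : Commute (pb ^ 2) ((pa * pb) ^ 2) := conj_sq_comm _ _ F2

def α : PromislowGroup := pa ^ 2
def β : PromislowGroup := pb ^ 2
def γ : PromislowGroup := (pa * pb) ^ 2

lemma key_mul (i j k i' j' k' : ℤ) :
    α ^ (i + i') * β ^ (j + j') * γ ^ (k + k') =
      (α ^ i * β ^ j * γ ^ k) * (α ^ i' * β ^ j' * γ ^ k') := by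
  have h1 : Commute (α ^ i') (β ^ j) := (c1.zpow_zpow i' j)
  have h2 : Commute (α ^ i') (γ ^ k) := (c2.zpow_zpow i' k)
  have h3 : Commute (β ^ j') (γ ^ k) := (c3.zpow_zpow j' k)
  rw [zpow_add, zpow_add, zpow_add]
  calc α ^ i * α ^ i' * (β ^ j * β ^ j') * (γ ^ k * γ ^ k')
      = α ^ i * (α ^ i' * β ^ j) * (β ^ j' * γ ^ k) * γ ^ k' := by group
    _ = α ^ i * (β ^ j * α ^ i') * (γ ^ k * β ^ j') * γ ^ k' := by rw [h1.eq, h3.eq]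
    _ = α ^ i * β ^ j * (α ^ i' * γ ^ k) * β ^ j' * γ ^ k' := by group
    _ = α ^ i * β ^ j * (γ ^ k * α ^ i') * β ^ j' * γ ^ k' := by rw [h2.eq]
    _ = (α ^ i * β ^ j * γ ^ k) * (α ^ i' * β ^ j' * γ ^ k') := by group

def g3 : Multiplicative (ℤ × ℤ × ℤ) →* PromislowGroup :=
  MonoidHom.mk' (fun v => α ^ v.toAdd.1 * β ^ v.toAdd.2.1 * γ ^ v.toAdd.2.2)
    (fun v w => by
      have := key_mul v.toAdd.1 v.toAdd.2.1 v.toAdd.2.2 w.toAdd.1 w.toAdd.2.1 w.toAdd.2.2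
      simpa using this)

end PromislowGroup

namespace PromislowGroup

def tr (v : ℤ × ℤ × ℤ) : G2 := ⟨false, false, v.1, v.2.1, v.2.2⟩

lemma tr_mul (v w : ℤ × ℤ × ℤ) : tr v * tr w = tr (v + w) := by
  ext <;> simp [tr, G2.sx, G2.sy, G2.sz]

lemma tr_zpow (v : ℤ × ℤ × ℤ) (k : ℤ) : tr v ^ k = tr (k • v) := by
  induction k using Int.induction_on with
  | zero => ext <;> simp [tr]
  | succ n ih => rw [zpow_add_one, ih, tr_mul]
                 congr 1
                 rw [add_smul, one_smul]
  | pred n ih => rw [zpow_sub_one, ih]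
                 have hinv : (tr v)⁻¹ = tr (-v) := by
                   ext <;> simp [tr, G2.sx, G2.sy, G2.sz]
                 rw [hinv, tr_mul]
                 congr 1
                 rw [sub_smul, one_smul]
                 abel

lemma θ_α : θ α = tr (2, 0, 0) := by
  show θ (pa ^ 2) = _
  rw [map_pow, θ_pa, pow_two]
  ext <;> simp [G2.Ag, tr, G2.sx, G2.sy, G2.sz]

lemma θ_β : θ β = tr (0, 2, 0) := by
  show θ (pb ^ 2) = _
  rw [map_pow, θ_pb, pow_two]
  ext <;> simp [G2.Bg, tr, G2.sx, G2.sy, G2.sz]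

lemma θ_γ : θ γ = tr (0, 0, 2) := by
  show θ ((pa * pb) ^ 2) = _
  rw [map_pow, map_mul, θ_pa, θ_pb, pow_two]
  ext <;> simp [G2.Ag, G2.Bg, tr, G2.sx, G2.sy, G2.sz]

lemma θ_g3 (v : Multiplicative (ℤ × ℤ × ℤ)) :
    θ (g3 v) = tr (2 * v.toAdd.1, 2 * v.toAdd.2.1, 2 * v.toAdd.2.2) := by
  show θ (α ^ v.toAdd.1 * β ^ v.toAdd.2.1 * γ ^ v.toAdd.2.2) = _
  rw [map_mul, map_mul, map_zpow, map_zpow, map_zpow, θ_α, θ_β, θ_γ,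
    tr_zpow, tr_zpow, tr_zpow, tr_mul, tr_mul]
  congr 1
  simp [Prod.ext_iff]
  omega

lemma g3_inj : Function.Injective g3 := by
  intro v w h
  have h2 := congrArg θ h
  rw [θ_g3, θ_g3] at h2
  simp only [tr, G2.mk.injEq] at h2
  obtain ⟨-, -, e1, e2, e3⟩ := h2
  have h4 : Multiplicative.toAdd v = Multiplicative.toAdd w := by
    have p1 : (Multiplicative.toAdd v).1 = (Multiplicative.toAdd w).1 := by omega
    have p2 : (Multiplicative.toAdd v).2.1 = (Multiplicative.toAdd w).2.1 := by omega
    have p3 : (Multiplicative.toAdd v).2.2 = (Multiplicative.toAdd w).2.2 := by omega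
    exact Prod.ext_iff.mpr ⟨p1, Prod.ext_iff.mpr ⟨p2, p3⟩⟩
  exact Multiplicative.toAdd.injective h4

end PromislowGroup

/-- No subgroup of the polycyclic group `H₄` is isomorphic to `ℤ³`.  Consequently the
group `P`, which contains a subgroup isomorphic to `ℤ³`, is not isomorphic to any
quotient of a subgroup of `H₄` (equivalently, no subgroup of `H₄` surjects onto `P`). -/
theorem h4Pc_no_Z3_subgroup_and_P_not_quotient :
    (∀ U : Subgroup H4Pc, ¬ Nonempty (U ≃* Multiplicative (ℤ × ℤ × ℤ))) ∧
    (∃ V : Subgroup PromislowGroup, Nonempty (V ≃* Multiplicative (ℤ × ℤ × ℤ))) ∧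
    ∀ (U : Subgroup H4Pc) (f : U →* PromislowGroup), ¬ Function.Surjective f := by
  refine ⟨?_, ?_, ?_⟩
  · rintro U ⟨e⟩
    exact H4Pc.no_Z3_quot U e.toMonoidHom e.surjective
  · exact ⟨PromislowGroup.g3.range, ⟨(MonoidHom.ofInjective PromislowGroup.g3_inj).symm⟩⟩
  · intro U f hf
    set V : Subgroup PromislowGroup := PromislowGroup.g3.range with hV
    have eV : V ≃* Multiplicative (ℤ × ℤ × ℤ) :=
      (MonoidHom.ofInjective PromislowGroup.g3_inj).symm
    set W' : Subgroup U := V.comap f with hW'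
    have fV : W' →* V := (f.comp W'.subtype).codRestrict V (fun u => u.2)
    have fV_surj : Function.Surjective
        ((f.comp W'.subtype).codRestrict V (fun u => u.2)) := by
      intro v
      obtain ⟨u, hu⟩ := hf (v : PromislowGroup)
      refine ⟨⟨u, ?_⟩, ?_⟩
      · have : f u ∈ V := by rw [hu]; exact v.2
        simpa [hW', Subgroup.mem_comap] using this
      · apply Subtype.ext
        exact hu
    have e2 : W' ≃* (W'.map U.subtype) :=
      Subgroup.equivMapOfInjective W' U.subtype (Subgroup.subtype_injective U)
    apply H4Pc.no_Z3_quot (W'.map U.subtype)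
      ((eV.toMonoidHom.comp ((f.comp W'.subtype).codRestrict V (fun u => u.2))).comp
        e2.symm.toMonoidHom)
    exact ((eV.surjective.comp fV_surj).comp e2.symm.surjective)
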